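/- Let (A, P̄) be a polarized C*-algebra with norm normal ordering, ω a coherent state, and N_ω its left kernel. The quotient P/(P ∩ N_ω) with inner product ⟨[a],[b]⟩ := ω(a*b) is a well-defined inner product space, the multiplication action γ_ω(a)[b] = [ab] satisfies ‖γ_ω(a)[b]‖_ω ≤ ‖a‖·‖[b]‖_ω, and the map U_ω([b]) := π_ω(b)v_ω extends to a unitary isomorphism of its completion H_ω^{Hardy} onto the GNS space H_ω intertwining γ_ω(a) with π_ω(a) for a ∈ P. -/
import Mathlib


set_option linter.unusedSectionVars false

open scoped ComplexOrder InnerProductSpace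

variable {A : Type*} [NormedRing A] [StarRing A] [CStarRing A] [NormedAlgebra ℂ A]
  [StarModule ℂ A] [CompleteSpace A]

/-- A state on a unital C*-algebra: a positive linear functional of norm one
(equivalently, taking the value 1 at the unit). -/
def IsState (ω : A →ₗ[ℂ] ℂ) : Prop :=
  ω 1 = 1 ∧ ∀ x : A, 0 ≤ ω (star x * x)

/-- A polarization of a unital C*-algebra `A`: a closed commutative unital Banach
subalgebra `P` generating `A` (as a C*-algebra) with `P ∩ P* = ℂ·1`. -/
def IsPolarization (P : Subalgebra ℂ A) : Prop :=
  IsClosed (P : Set A) ∧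
  (∀ a ∈ P, ∀ b ∈ P, a * b = b * a) ∧
  (Algebra.adjoin ℂ ((P : Set A) ∪ star (P : Set A))).topologicalClosure = ⊤ ∧
  (∀ x ∈ P, star x ∈ P → ∃ c : ℂ, x = algebraMap ℂ A c)

/-- A coherent state on the polarized C*-algebra `(A, P)`. -/
def IsCoherentState (P : Subalgebra ℂ A) (ω : A →ₗ[ℂ] ℂ) : Prop :=
  IsState ω ∧ ∀ x : A, ∀ a ∈ P, ω (x * a) = ω x * ω a

/-- The polarized C*-algebra `(A, P)` admits norm normal ordering: finite sums
`∑ bₖ* aₖ` with `aₖ, bₖ ∈ P` are norm-dense in `A`. -/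
def AdmitsNormalOrdering (P : Subalgebra ℂ A) : Prop :=
  Dense {x : A | ∃ (n : ℕ) (a b : Fin n → A), (∀ i, a i ∈ P ∧ b i ∈ P) ∧
    x = ∑ i, star (b i) * a i}

/-- `(π, H, v)` is a GNS triple for the state `ω`. -/
def IsGNS {H : Type*} [NormedAddCommGroup H] [InnerProductSpace ℂ H] [CompleteSpace H]
    (ω : A →ₗ[ℂ] ℂ) (π : A →⋆ₐ[ℂ] (H →L[ℂ] H)) (v : H) : Prop :=
  ‖v‖ = 1 ∧ (∀ x : A, ω x = ⟪v, π x v⟫_ℂ) ∧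
    Dense (Set.range fun x : A => π x v)

/-- The Hardy-type (HGNS) representation. For a coherent state `ω` on a
polarized C*-algebra `(A, P̄)` with norm normal ordering and `P = P̄*`:
(1) the inner product `⟨[a],[b]⟩ = ω(a*b)` on `P/(P ∩ N_ω)` is well defined;
(2) multiplication `γ_ω(a)[b] = [ab]` satisfies `‖γ_ω(a)[b]‖_ω ≤ ‖a‖·‖[b]‖_ω`;
(3) `U_ω([b]) := π_ω(b)v_ω` is inner-product preserving with dense range and
intertwines `γ_ω(a)` with `π_ω(a)`, hence extends to a unitary isomorphism of the
completion of `P/(P ∩ N_ω)` onto the GNS space `H_ω`. -/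
theorem stmt_19 {H : Type*} [NormedAddCommGroup H] [InnerProductSpace ℂ H] [CompleteSpace H]
    (P : Subalgebra ℂ A) (hP : IsPolarization P) (hno : AdmitsNormalOrdering P)
    (ω : A →ₗ[ℂ] ℂ) (hω : IsCoherentState P ω)
    (π : A →⋆ₐ[ℂ] (H →L[ℂ] H)) (v : H) (hGNS : IsGNS ω π v) :
    -- (1) well-definedness of the inner product on the quotient P/(P ∩ N_ω)
    (∀ a a' b : A, star a ∈ P → star a' ∈ P → star b ∈ P →
      ω (star (a - a') * (a - a')) = 0 →
      ω (star a * b) = ω (star a' * b) ∧ ω (star b * a) = ω (star b * a')) ∧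
    -- (2) the norm bound for the multiplication action γ_ω
    (∀ a b : A, star a ∈ P → star b ∈ P →
      ω (star (a * b) * (a * b)) ≤ (‖a‖ ^ 2 : ℂ) * ω (star b * b)) ∧
    -- (3) U_ω is inner-product preserving, has dense range, and intertwines
    (∀ a b : A, star a ∈ P → star b ∈ P → ⟪π a v, π b v⟫_ℂ = ω (star a * b)) ∧
    Dense {w : H | ∃ b : A, star b ∈ P ∧ w = π b v} ∧
    (∀ a b : A, star a ∈ P → star b ∈ P → π a (π b v) = π (a * b) v) := by
  classical
  obtain ⟨hv, hrep, hdense⟩ := hGNS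
  obtain ⟨hstate, hcoh⟩ := hω
  letI : CStarAlgebra A := {}
  letI : CStarAlgebra (H →L[ℂ] H) := {}
  -- the fundamental GNS identity
  have hvv : ⟪v, v⟫_ℂ = 1 := by
    rw [inner_self_eq_norm_sq_to_K, hv]; norm_num
  have hadj : ∀ x : A, π (star x) = ContinuousLinearMap.adjoint (π x) := by
    intro x
    rw [map_star, ContinuousLinearMap.star_eq_adjoint]
  have key : ∀ x y : A, ω (star x * y) = ⟪π x v, π y v⟫_ℂ := by
    intro x y
    rw [hrep, map_mul, ContinuousLinearMap.mul_apply, hadj,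
      ContinuousLinearMap.adjoint_inner_right]
  -- part (1)
  have part1 : ∀ a a' b : A, star a ∈ P → star a' ∈ P → star b ∈ P →
      ω (star (a - a') * (a - a')) = 0 →
      ω (star a * b) = ω (star a' * b) ∧ ω (star b * a) = ω (star b * a') := by
    intro a a' b _ _ _ h0
    have h1 : π a v = π a' v := by
      rw [key] at h0
      have := inner_self_eq_zero.mp h0
      rw [map_sub, ContinuousLinearMap.sub_apply, sub_eq_zero] at this
      exact this
    constructor
    · rw [key, key, h1]
    · rw [key, key, h1]
  refine ⟨part1, ?_, ?_, ?_, ?_⟩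
  -- part (2)
  · intro a b _ _
    have hb : ω (star b * b) = ((‖π b v‖ ^ 2 : ℝ) : ℂ) := by
      rw [key, inner_self_eq_norm_sq_to_K]; norm_num
    have hab : ω (star (a * b) * (a * b)) = ((‖π (a * b) v‖ ^ 2 : ℝ) : ℂ) := by
      rw [key, inner_self_eq_norm_sq_to_K]; norm_num
    rw [hb, hab]
    have : ((‖a‖ ^ 2 : ℂ)) * ((‖π b v‖ ^ 2 : ℝ) : ℂ) = (((‖a‖ * ‖π b v‖) ^ 2 : ℝ) : ℂ) := by
      push_cast; ring
    rw [this]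
    rw [Complex.real_le_real]
    have hle : ‖π (a * b) v‖ ≤ ‖a‖ * ‖π b v‖ := by
      calc ‖π (a * b) v‖ = ‖π a (π b v)‖ := by rw [map_mul]; rfl
        _ ≤ ‖π a‖ * ‖π b v‖ := (π a).le_opNorm _
        _ ≤ ‖a‖ * ‖π b v‖ := by
            gcongr; exact NonUnitalStarAlgHom.norm_apply_le π a
    have := sq_le_sq' (by nlinarith [norm_nonneg (π (a * b) v)]) hle
    simpa using this
  -- part (3a)
  · intro a b _ _
    exact (key a b).symm
  -- part (3b): density
  · -- for a ∈ P, π a v = ω a • v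
    have hstar : ∀ x : A, ω (star x) = starRingEnd ℂ (ω x) := by
      intro x
      have h1 : ω (star x * 1) = ⟪π x v, π 1 v⟫_ℂ := key x 1
      rw [mul_one, map_one, ContinuousLinearMap.one_apply] at h1
      rw [h1, ← inner_conj_symm, ← hrep]
    have hvec : ∀ a ∈ P, π a v = ω a • v := by
      intro a ha
      have h0 : ⟪π a v - ω a • v, π a v - ω a • v⟫_ℂ = 0 := by
        have haa : ⟪π a v, π a v⟫_ℂ = starRingEnd ℂ (ω a) * ω a := by
          rw [← key, ← hstar, ← hcoh (star a) a ha]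
        have hva : ⟪v, π a v⟫_ℂ = ω a := (hrep a).symm
        have hav : ⟪π a v, v⟫_ℂ = starRingEnd ℂ (ω a) := by
          rw [← inner_conj_symm, hva]
        rw [inner_sub_left, inner_sub_right, inner_sub_right, inner_smul_left,
          inner_smul_right, inner_smul_left, inner_smul_right, haa, hva, hav, hvv]
        ring
      have := inner_self_eq_zero.mp h0
      rwa [sub_eq_zero] at this
    -- the set is hit by all normally ordered elements
    have hsub : ∀ x ∈ {x : A | ∃ (n : ℕ) (a b : Fin n → A), (∀ i, a i ∈ P ∧ b i ∈ P) ∧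
        x = ∑ i, star (b i) * a i},
        π x v ∈ {w : H | ∃ b : A, star b ∈ P ∧ w = π b v} := by
      rintro x ⟨n, a, b, hab, rfl⟩
      refine ⟨∑ i, ω (a i) • star (b i), ?_, ?_⟩
      · rw [star_sum]
        refine Subalgebra.sum_mem P fun i _ => ?_
        rw [star_smul, star_star]
        exact Subalgebra.smul_mem P (hab i).2 _
      · rw [map_sum, map_sum]
        simp only [ContinuousLinearMap.sum_apply]
        refine Finset.sum_congr rfl fun i _ => ?_
        rw [map_mul, ContinuousLinearMap.mul_apply, hvec (a i) (hab i).1]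
        simp [map_smul]
    -- continuity of x ↦ π x v
    have hcont : Continuous (fun x : A => π x v) := by
      have hlip : LipschitzWith 1 (fun x : A => π x v) := by
        refine LipschitzWith.of_dist_le_mul fun x y => ?_
        rw [dist_eq_norm, dist_eq_norm]
        calc ‖π x v - π y v‖ = ‖π (x - y) v‖ := by rw [map_sub]; rfl
          _ ≤ ‖π (x - y)‖ * ‖v‖ := (π (x - y)).le_opNorm v
          _ ≤ ‖x - y‖ * 1 := by
              gcongr
              · exact NonUnitalStarAlgHom.norm_apply_le π (x - y)
              · exact le_of_eq hv
          _ = 1 * ‖x - y‖ := by ring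
      exact hlip.continuous
    -- density argument
    intro w
    have hw : w ∈ closure (Set.range fun x : A => π x v) := hdense w
    have h1 : Set.range (fun x : A => π x v) ⊆
        closure {w : H | ∃ b : A, star b ∈ P ∧ w = π b v} := by
      rintro _ ⟨x, rfl⟩
      exact map_mem_closure (f := fun x : A => π x v) hcont (hno x) hsub
    have := closure_mono h1 hw
    rwa [closure_closure] at this
  -- part (3c)
  · intro a b _ _
    rw [map_mul]; rfl
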